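/- Let R be a unital associative ring and δ : R → R a derivation. The differential polynomial ring R[x;id_R,δ] is a simple ring if and only if R is δ-simple and the center Z(R[x;id_R,δ]) is a field. -/

import Mathlib

/-- `δ` is a `σ`-derivation of `R`: it is additive and satisfies the twisted Leibniz rule
`δ(ab) = σ(a)δ(b) + δ(a)b`. -/
def IsSigmaDerivation {R : Type*} [Ring R] (σ : R →+* R) (δ : R → R) : Prop :=
  (∀ a b : R, δ (a + b) = δ a + δ b) ∧ ∀ a b : R, δ (a * b) = σ a * δ b + δ a * b

/-- `S`, together with the ring morphism `f : R →+* S` and the element `x : S`, is an Ore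
extension `R[x;σ,δ]`: the powers `1, x, x², …` form a basis of `S` as a left `R`-module
(i.e. every element of `S` is, in a unique way, a finite sum `Σᵢ f(aᵢ) xⁱ`), and the
commutation rule `x·r = σ(r)·x + δ(r)` holds for all `r ∈ R`. -/
structure IsOreExtension {R S : Type*} [Ring R] [Ring S]
    (σ : R →+* R) (δ : R → R) (f : R →+* S) (x : S) : Prop where
  basis : Function.Bijective fun a : ℕ →₀ R => a.sum fun i r => f r * x ^ i
  rel : ∀ r : R, x * f r = f (σ r) * x + f (δ r)

/-- `R` is `σ`-`δ`-simple: the only two-sided ideals `J` of `R` with `σ(J) ⊆ J` and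
`δ(J) ⊆ J` are `{0}` and `R`. -/
def IsSigmaDeltaSimple {R : Type*} [Ring R] (σ : R →+* R) (δ : R → R) : Prop :=
  ∀ J : TwoSidedIdeal R, (∀ a ∈ J, σ a ∈ J) → (∀ a ∈ J, δ a ∈ J) → J = ⊥ ∨ J = ⊤

/-- `R` is `δ`-simple: the only two-sided ideals `J` of `R` with `δ(J) ⊆ J` are `{0}`
and `R`. -/
def IsDeltaSimple {R : Type*} [Ring R] (δ : R → R) : Prop :=
  ∀ J : TwoSidedIdeal R, (∀ a ∈ J, δ a ∈ J) → J = ⊥ ∨ J = ⊤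

namespace Stmt15Aux

variable {R S : Type*} [Ring R] [Ring S] {δ : R → R} {f : R →+* S} {x : S}

lemma delta_zero (hδ : IsSigmaDerivation (RingHom.id R) δ) : δ 0 = 0 := by
  have h := hδ.1 0 0
  rw [add_zero] at h
  exact (add_eq_left.mp h.symm)

lemma delta_one (hδ : IsSigmaDerivation (RingHom.id R) δ) : δ 1 = 0 := by
  have h := hδ.2 1 1
  simp only [RingHom.id_apply, one_mul, mul_one] at h
  exact (add_eq_left.mp h.symm)

/-- The additive equivalence between `ℕ →₀ R` and `S`. -/
noncomputable def E (hS : IsOreExtension (RingHom.id R) δ f x) : (ℕ →₀ R) ≃+ S :=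
  AddEquiv.ofBijective
    (AddMonoidHom.mk' (fun a : ℕ →₀ R => a.sum fun i r => f r * x ^ i)
      (fun a b => Finsupp.sum_add_index' (fun i => by simp) (fun i r s => by
        rw [map_add, add_mul])))
    hS.basis

variable (hδ : IsSigmaDerivation (RingHom.id R) δ) (hS : IsOreExtension (RingHom.id R) δ f x)

lemma E_apply (a : ℕ →₀ R) : E hS a = a.sum fun i r => f r * x ^ i := rfl

lemma E_single (i : ℕ) (r : R) : E hS (Finsupp.single i r) = f r * x ^ i := by
  rw [E_apply, Finsupp.sum_single_index (by simp)]

/-- domain shift `a(i) ↦ a(i+1)`. -/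
noncomputable def shift (a : ℕ →₀ R) : ℕ →₀ R :=
  Finsupp.embDomain ⟨Nat.succ, Nat.succ_injective⟩ a

lemma shift_apply_succ (a : ℕ →₀ R) (i : ℕ) : shift a (i + 1) = a i :=
  Finsupp.embDomain_apply_self _ a i

lemma shift_apply_zero (a : ℕ →₀ R) : shift a 0 = 0 :=
  Finsupp.embDomain_notin_range _ a 0 (by simp)

noncomputable def dmap (hδ : IsSigmaDerivation (RingHom.id R) δ) (a : ℕ →₀ R) : ℕ →₀ R :=
  Finsupp.mapRange δ (delta_zero hδ) a

lemma dmap_apply (a : ℕ →₀ R) (i : ℕ) : dmap hδ a i = δ (a i) :=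
  Finsupp.mapRange_apply

lemma rel' (hS : IsOreExtension (RingHom.id R) δ f x) (r : R) :
    x * f r = f r * x + f (δ r) := by
  have := hS.rel r
  rwa [RingHom.id_apply] at this

lemma E_mul_x (a : ℕ →₀ R) : E hS a * x = E hS (shift a) := by
  rw [E_apply, E_apply, shift, Finsupp.sum_embDomain, Finsupp.sum_mul]
  exact Finsupp.sum_congr fun i _ => by
    simp only [Function.Embedding.coeFn_mk, Nat.succ_eq_add_one, pow_succ, mul_assoc]

lemma x_mul_E (a : ℕ →₀ R) : x * E hS a = E hS (shift a + dmap hδ a) := by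
  rw [E_apply, map_add, Finsupp.mul_sum]
  rw [show E hS (shift a) = a.sum fun i r => f r * x ^ (i + 1) by
    rw [E_apply, shift, Finsupp.sum_embDomain]; rfl]
  rw [show E hS (dmap hδ a) = a.sum fun i r => f (δ r) * x ^ i by
    rw [E_apply, dmap, Finsupp.sum_mapRange_index (fun i => by simp)]]
  rw [← Finsupp.sum_add]
  exact Finsupp.sum_congr fun i _ => by
    rw [← mul_assoc, rel' hS, add_mul, mul_assoc, ← pow_succ']

lemma f_mul_E (r : R) (a : ℕ →₀ R) :
    f r * E hS a = E hS (Finsupp.mapRange (r * ·) (mul_zero r) a) := by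
  rw [E_apply, E_apply, Finsupp.sum_mapRange_index (fun i => by simp), Finsupp.mul_sum]
  exact Finsupp.sum_congr fun i _ => by rw [← mul_assoc, ← map_mul]

lemma symm_x_mul (s : S) :
    (E hS).symm (x * s) = shift ((E hS).symm s) + dmap hδ ((E hS).symm s) := by
  rw [(E hS).symm_apply_eq, ← x_mul_E hδ hS, (E hS).apply_symm_apply]

lemma symm_mul_x (s : S) : (E hS).symm (s * x) = shift ((E hS).symm s) := by
  rw [(E hS).symm_apply_eq, ← E_mul_x hS, (E hS).apply_symm_apply]

lemma symm_f_mul (r : R) (s : S) :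
    (E hS).symm (f r * s) = Finsupp.mapRange (r * ·) (mul_zero r) ((E hS).symm s) := by
  rw [(E hS).symm_apply_eq, ← f_mul_E hS, (E hS).apply_symm_apply]

include hδ in
/-- commuting a power of `x` past `f r`: leading coefficient is preserved. -/
lemma pow_mul_f (i : ℕ) (r : R) :
    ∃ b : ℕ →₀ R, x ^ i * f r = E hS b ∧ b i = r ∧ ∀ j, i < j → b j = 0 := by
  induction i with
  | zero =>
    refine ⟨Finsupp.single 0 r, ?_, by simp, fun j hj => ?_⟩
    · rw [E_single, pow_zero, one_mul, mul_one]
    · rw [Finsupp.single_apply, if_neg (by omega)]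
  | succ i ih =>
    obtain ⟨b, hb, hbi, hbj⟩ := ih
    refine ⟨shift b + dmap hδ b, ?_, ?_, fun j hj => ?_⟩
    · rw [pow_succ', mul_assoc, hb, x_mul_E hδ hS]
    · rw [Finsupp.add_apply, shift_apply_succ, dmap_apply, hbi,
        show b (i+1) = 0 from hbj _ (by omega), delta_zero hδ, add_zero]
    · obtain ⟨k, rfl⟩ : ∃ k, j = k + 1 := ⟨j - 1, by omega⟩
      rw [Finsupp.add_apply, shift_apply_succ, dmap_apply,
        hbj k (by omega), hbj (k+1) (by omega), delta_zero hδ, add_zero]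

include hδ in
/-- coefficients of `s * f r` : above-`n` coefficients vanish and the `n`-th is multiplied. -/
lemma coeff_mul_f {n : ℕ} (s : S) (hs : ∀ j, n < j → (E hS).symm s j = 0) (r : R) :
    (∀ j, n < j → (E hS).symm (s * f r) j = 0) ∧
      (E hS).symm (s * f r) n = (E hS).symm s n * r := by
  classical
  set a := (E hS).symm s with ha
  choose b hb hbi hbj using fun i => pow_mul_f hδ hS i r
  have key : s * f r = E hS (a.sum fun i t => Finsupp.mapRange (t * ·) (mul_zero t) (b i)) := by
    conv_lhs => rw [← (E hS).apply_symm_apply s, ← ha, E_apply, Finsupp.sum_mul]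
    rw [map_finsuppSum]
    exact Finsupp.sum_congr fun i _ => by
      rw [mul_assoc, hb, ← f_mul_E hS]
  have hsymm : (E hS).symm (s * f r) =
      a.sum fun i t => Finsupp.mapRange (t * ·) (mul_zero t) (b i) := by
    rw [key, (E hS).symm_apply_apply]
  have hsupp : ∀ i ∈ a.support, i ≤ n := by
    intro i hi
    by_contra h
    exact (Finsupp.mem_support_iff.mp hi) (hs i (by omega))
  constructor
  · intro j hj
    rw [hsymm, Finsupp.sum_apply]
    refine Finset.sum_eq_zero fun i hi => ?_
    simp only [Finsupp.mapRange_apply]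
    rw [hbj i j (lt_of_le_of_lt (hsupp i hi) hj), mul_zero]
  · rw [hsymm, Finsupp.sum_apply, Finsupp.sum,
      Finset.sum_eq_single n
        (fun i hi hne => by
          simp only [Finsupp.mapRange_apply]
          rw [hbj i n (lt_of_le_of_ne (hsupp i hi) hne), mul_zero])
        (fun hn => by
          simp only [Finsupp.mapRange_apply]
          rw [Finsupp.notMem_support_iff.mp hn, zero_mul])]
    simp only [Finsupp.mapRange_apply, hbi]

section Forward

variable (J : TwoSidedIdeal R)

/-- the carrier of the coefficient-wise ideal. -/
def CC (hS : IsOreExtension (RingHom.id R) δ f x) (J : TwoSidedIdeal R) : Set S :=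
  {s : S | ∀ i, (E hS).symm s i ∈ J}

include hδ in
lemma CC_x_mul (hJ : ∀ a ∈ J, δ a ∈ J) {s : S} (hs : s ∈ CC hS J) : x * s ∈ CC hS J := by
  intro i
  rw [symm_x_mul hδ hS, Finsupp.add_apply, dmap_apply]
  refine J.add_mem ?_ (hJ _ (hs i))
  cases i with
  | zero => rw [shift_apply_zero]; exact J.zero_mem
  | succ k => rw [shift_apply_succ]; exact hs k

include hδ in
lemma CC_xpow_mul (hJ : ∀ a ∈ J, δ a ∈ J) {s : S} (hs : s ∈ CC hS J) (i : ℕ) :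
    x ^ i * s ∈ CC hS J := by
  induction i with
  | zero => rwa [pow_zero, one_mul]
  | succ k ih =>
    rw [pow_succ', mul_assoc]
    exact CC_x_mul hδ hS J hJ ih

lemma CC_f_mul (r : R) {s : S} (hs : s ∈ CC hS J) : f r * s ∈ CC hS J := by
  intro i
  rw [symm_f_mul hS, Finsupp.mapRange_apply]
  exact J.mul_mem_left _ _ (hs i)

lemma CC_sum {ι : Type*} (T : Finset ι) (g : ι → S) (hg : ∀ i ∈ T, g i ∈ CC hS J) :
    (∑ i ∈ T, g i) ∈ CC hS J := by
  classical
  induction T using Finset.induction_on with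
  | empty => intro i; simp only [Finset.sum_empty, map_zero, Finsupp.coe_zero,
      Pi.zero_apply]; exact J.zero_mem
  | insert _ _ hnot ih =>
    rw [Finset.sum_insert hnot]
    intro i
    rw [map_add, Finsupp.add_apply]
    exact J.add_mem (hg _ (Finset.mem_insert_self _ _) i)
      ((ih fun j hj => hg j (Finset.mem_insert_of_mem hj)) i)

include hδ in
lemma CC_mul_left (hJ : ∀ a ∈ J, δ a ∈ J) {s : S} (hs : s ∈ CC hS J) (t : S) :
    t * s ∈ CC hS J := by
  have ht : t = ((E hS).symm t).sum fun i r => f r * x ^ i := by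
    conv_lhs => rw [← (E hS).apply_symm_apply t, E_apply]
  rw [ht, Finsupp.sum_mul, Finsupp.sum]
  refine CC_sum hS J _ _ fun i _ => ?_
  rw [mul_assoc]
  exact CC_f_mul hS J _ (CC_xpow_mul hδ hS J hJ hs i)

lemma CC_mul_right {s : S} (hs : s ∈ CC hS J) (t : S) : s * t ∈ CC hS J := by
  have hrep : s = ((E hS).symm s).sum fun i r => f r * x ^ i := by
    conv_lhs => rw [← (E hS).apply_symm_apply s, E_apply]
  rw [hrep, Finsupp.sum_mul, Finsupp.sum]
  refine CC_sum hS J _ _ fun i hi => ?_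
  rw [mul_assoc]
  -- f (a i) * (x ^ i * t) : coefficients are (a i) * (coefficients of x^i * t) ∈ J
  intro j
  rw [symm_f_mul hS, Finsupp.mapRange_apply]
  exact J.mul_mem_right _ _ (hs i)

include hδ hS in
lemma deltaSimple_of_simple (hsimple : IsSimpleRing S) :
    ∀ J : TwoSidedIdeal R, (∀ a ∈ J, δ a ∈ J) → J = ⊥ ∨ J = ⊤ := by
  intro J hJ
  by_cases hbot : J = ⊥
  · exact Or.inl hbot
  right
  -- get a nonzero element of J
  have hex : ∃ a ∈ J, a ≠ 0 := by
    by_contra h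
    push_neg at h
    exact hbot (eq_bot_iff.2 fun a ha => (TwoSidedIdeal.mem_bot R).2 (h a ha))
  obtain ⟨a₀, ha₀J, ha₀⟩ := hex
  -- the coefficient ideal
  set I : TwoSidedIdeal S := TwoSidedIdeal.mk' (CC hS J)
    (fun i => by rw [map_zero]; exact J.zero_mem)
    (fun hs ht i => by rw [map_add, Finsupp.add_apply]; exact J.add_mem (hs i) (ht i))
    (fun hs i => by rw [map_neg, Finsupp.neg_apply]; exact J.neg_mem (hs i))
    (fun hs => CC_mul_left hδ hS J hJ hs _)
    (fun hs => CC_mul_right hS J hs _) with hI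
  have hmem : ∀ s : S, s ∈ I ↔ s ∈ CC hS J := fun s => TwoSidedIdeal.mem_mk' _ _ _ _ _ _ s
  have hfa : f a₀ ∈ I := by
    rw [hmem]
    intro i
    have : (E hS).symm (f a₀) = Finsupp.single 0 a₀ := by
      rw [(E hS).symm_apply_eq, E_single, pow_zero, mul_one]
    rw [this, Finsupp.single_apply]
    split
    · exact ha₀J
    · exact J.zero_mem
  have hfa0 : f a₀ ≠ 0 := by
    intro h
    have : E hS (Finsupp.single 0 a₀) = E hS 0 := by
      rw [E_single, pow_zero, mul_one, h, map_zero]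
    exact ha₀ (by simpa [Finsupp.single_eq_zero] using (E hS).injective this)
  have hItop : I = ⊤ := by
    rcases hsimple.simple.eq_bot_or_eq_top I with h | h
    · exact absurd ((TwoSidedIdeal.mem_bot S).1 (h ▸ hfa)) hfa0
    · exact h
  have h1 : (1 : S) ∈ I := hItop ▸ TwoSidedIdeal.mem_top S
  rw [hmem] at h1
  have hone : (E hS).symm (1 : S) = Finsupp.single 0 1 := by
    rw [(E hS).symm_apply_eq, E_single, pow_zero, mul_one, map_one]
  have := h1 0
  rw [hone] at this
  simp only [Finsupp.single_apply, if_pos rfl] at this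
  exact (TwoSidedIdeal.one_mem_iff J).1 this

end Forward

section Backward

include hδ hS in
lemma simple_of_deltaSimple
    (h1 : ∀ J : TwoSidedIdeal R, (∀ a ∈ J, δ a ∈ J) → J = ⊥ ∨ J = ⊤)
    (h2 : IsField (Subring.center S)) : IsSimpleRing S := by
  classical
  haveI : Nontrivial S := by
    obtain ⟨a, b, hab⟩ := h2.exists_pair_ne
    exact ⟨a.val, b.val, fun h => hab (Subtype.ext h)⟩
  haveI : Nontrivial R := ⟨1, 0, fun h => by
    have : (1 : S) = 0 := by rw [← f.map_one, h, f.map_zero]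
    exact one_ne_zero this⟩
  haveI hnt : Nontrivial (TwoSidedIdeal S) := ⟨⊥, ⊤, fun h => one_ne_zero
    ((TwoSidedIdeal.mem_bot S).1 (h.symm ▸ (TwoSidedIdeal.mem_top S)))⟩
  refine ⟨⟨fun I => ?_⟩⟩
  by_cases hIbot : I = ⊥
  · exact Or.inl hIbot
  right
  obtain ⟨p₀, hp₀I, hp₀⟩ : ∃ p ∈ I, p ≠ 0 := by
    by_contra h
    push_neg at h
    exact hIbot (eq_bot_iff.2 fun s hs => (TwoSidedIdeal.mem_bot S).2 (h s hs))
  set P : ℕ → Prop := fun m => ∃ p, p ∈ I ∧ p ≠ 0 ∧ ∀ j, m < j → (E hS).symm p j = 0 with hP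
  have hPex : ∃ m, P m := by
    refine ⟨((E hS).symm p₀).support.sup id, p₀, hp₀I, hp₀, fun j hj => ?_⟩
    by_contra h
    have := Finset.le_sup (f := id) (Finsupp.mem_support_iff.2 h)
    simp only [id] at this
    omega
  set n : ℕ := Nat.find hPex with hn
  -- minimality: an element of I whose coefficients vanish from degree n on is zero
  have minzero : ∀ s, s ∈ I → (∀ j, n ≤ j → (E hS).symm s j = 0) → s = 0 := by
    intro s hsI hsc
    by_contra hs0
    rcases Nat.eq_zero_or_pos n with h0 | hpos
    · apply hs0
      have hz : (E hS).symm s = 0 := Finsupp.ext fun j => hsc j (by omega)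
      have := congrArg (E hS) hz
      rwa [(E hS).apply_symm_apply, map_zero] at this
    · obtain ⟨k, hk⟩ : ∃ k, n = k + 1 := ⟨n - 1, by omega⟩
      exact Nat.find_min hPex (show n - 1 < n by omega)
        ⟨s, hsI, hs0, fun j hj => hsc j (by omega)⟩
  obtain ⟨p, hpI, hp0, hpc⟩ : P n := Nat.find_spec hPex
  have hlead : (E hS).symm p n ≠ 0 := by
    intro h0
    apply hp0
    apply minzero p hpI
    intro j hj
    rcases eq_or_lt_of_le hj with h | h
    · rw [← h]; exact h0
    · exact hpc j h
  -- the ideal of leading coefficients at level n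
  set Jset : Set R :=
    {r | ∃ q, q ∈ I ∧ (∀ j, n < j → (E hS).symm q j = 0) ∧ (E hS).symm q n = r} with hJset
  have Jset_zero : (0 : R) ∈ Jset := ⟨0, I.zero_mem, by simp, by simp⟩
  have Jset_add : ∀ {y z : R}, y ∈ Jset → z ∈ Jset → y + z ∈ Jset := by
    rintro y z ⟨q, hqI, hqv, hqn⟩ ⟨q', hq'I, hq'v, hq'n⟩
    exact ⟨q + q', I.add_mem hqI hq'I,
      fun j hj => by rw [map_add, Finsupp.add_apply, hqv j hj, hq'v j hj, add_zero],
      by rw [map_add, Finsupp.add_apply, hqn, hq'n]⟩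
  have Jset_neg : ∀ {y : R}, y ∈ Jset → -y ∈ Jset := by
    rintro y ⟨q, hqI, hqv, hqn⟩
    exact ⟨-q, I.neg_mem hqI,
      fun j hj => by rw [map_neg, Finsupp.neg_apply, hqv j hj, neg_zero],
      by rw [map_neg, Finsupp.neg_apply, hqn]⟩
  have Jset_ml : ∀ {r' y : R}, y ∈ Jset → r' * y ∈ Jset := by
    rintro r' y ⟨q, hqI, hqv, hqn⟩
    exact ⟨f r' * q, I.mul_mem_left _ _ hqI,
      fun j hj => by rw [symm_f_mul hS, Finsupp.mapRange_apply, hqv j hj, mul_zero],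
      by rw [symm_f_mul hS, Finsupp.mapRange_apply, hqn]⟩
  have Jset_mr : ∀ {y r' : R}, y ∈ Jset → y * r' ∈ Jset := by
    rintro y r' ⟨q, hqI, hqv, hqn⟩
    obtain ⟨h₁, h₂⟩ := coeff_mul_f hδ hS q hqv r'
    exact ⟨q * f r', I.mul_mem_right _ _ hqI, h₁, by rw [h₂, hqn]⟩
  set J : TwoSidedIdeal R := TwoSidedIdeal.mk' Jset Jset_zero Jset_add Jset_neg Jset_ml Jset_mr
    with hJ
  have Jmem : ∀ r : R, r ∈ J ↔ r ∈ Jset := fun r => TwoSidedIdeal.mem_mk' _ _ _ _ _ _ r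
  have Jdelta : ∀ r ∈ J, δ r ∈ J := by
    intro r hr
    rw [Jmem] at hr ⊢
    obtain ⟨q, hqI, hqv, hqn⟩ := hr
    refine ⟨x * q - q * x, I.sub_mem (I.mul_mem_left _ _ hqI) (I.mul_mem_right _ _ hqI),
      ?_, ?_⟩
    · intro j hj
      rw [map_sub, Finsupp.sub_apply, symm_x_mul hδ hS, symm_mul_x hS, Finsupp.add_apply,
        dmap_apply, hqv j hj, delta_zero hδ, add_zero, sub_self]
    · rw [map_sub, Finsupp.sub_apply, symm_x_mul hδ hS, symm_mul_x hS, Finsupp.add_apply,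
        dmap_apply, hqn, add_sub_cancel_left]
  have hJtop : J = ⊤ := by
    rcases h1 J Jdelta with h | h
    · exfalso
      apply hlead
      apply (TwoSidedIdeal.mem_bot R).1
      rw [← h, Jmem]
      exact ⟨p, hpI, hpc, rfl⟩
    · exact h
  obtain ⟨q, hqI, hqv, hqn⟩ : (1 : R) ∈ Jset := by
    rw [← Jmem, hJtop]; exact TwoSidedIdeal.mem_top R
  have hq0 : q ≠ 0 := by
    intro h
    rw [h, map_zero] at hqn
    simp only [Finsupp.coe_zero, Pi.zero_apply] at hqn
    exact one_ne_zero hqn.symm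
  -- q commutes with every f r
  have commf : ∀ r : R, f r * q = q * f r := by
    intro r
    have hd : f r * q - q * f r ∈ I :=
      I.sub_mem (I.mul_mem_left _ _ hqI) (I.mul_mem_right _ _ hqI)
    obtain ⟨h₁, h₂⟩ := coeff_mul_f hδ hS q hqv r
    have hvan : ∀ j, n ≤ j → (E hS).symm (f r * q - q * f r) j = 0 := by
      intro j hj
      rw [map_sub, Finsupp.sub_apply, symm_f_mul hS, Finsupp.mapRange_apply]
      rcases eq_or_lt_of_le hj with h | h
      · rw [← h, hqn, h₂, hqn, mul_one, one_mul, sub_self]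
      · rw [hqv j h, h₁ j h, mul_zero, sub_zero]
    have := minzero _ hd hvan
    rwa [sub_eq_zero] at this
  -- q commutes with x
  have commx : x * q = q * x := by
    have hd : x * q - q * x ∈ I :=
      I.sub_mem (I.mul_mem_left _ _ hqI) (I.mul_mem_right _ _ hqI)
    have hvan : ∀ j, n ≤ j → (E hS).symm (x * q - q * x) j = 0 := by
      intro j hj
      rw [map_sub, Finsupp.sub_apply, symm_x_mul hδ hS, symm_mul_x hS, Finsupp.add_apply,
        dmap_apply, add_sub_cancel_left]
      rcases eq_or_lt_of_le hj with h | h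
      · rw [← h, hqn, delta_one hδ]
      · rw [hqv j h, delta_zero hδ]
    have := minzero _ hd hvan
    rwa [sub_eq_zero] at this
  have qcenter : q ∈ Subring.center S := by
    rw [Subring.mem_center_iff]
    intro g
    have hcom : Commute q g := by
      have hg : g = ((E hS).symm g).sum fun i r => f r * x ^ i := by
        conv_lhs => rw [← (E hS).apply_symm_apply g, E_apply]
      rw [hg, Finsupp.sum]
      refine Commute.sum_right _ _ _ fun i _ => ?_
      exact Commute.mul_right (show Commute q (f _) from (commf _).symm)
        ((show Commute q x from commx.symm).pow_right i)
    exact hcom.symm.eq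
  have hq0' : (⟨q, qcenter⟩ : Subring.center S) ≠ 0 := fun h => hq0 (Subtype.ext_iff.mp h)
  obtain ⟨u, hu⟩ := h2.mul_inv_cancel hq0'
  have h1S : q * (u : S) = 1 := by
    have := congrArg Subtype.val hu
    simpa using this
  have h1I : (1 : S) ∈ I := h1S ▸ I.mul_mem_right _ _ hqI
  exact (TwoSidedIdeal.one_mem_iff I).1 h1I

end Backward

end Stmt15Aux


/-- The differential polynomial ring `R[x;id,δ]` is simple if and only if `R` is
`δ`-simple and the center of `R[x;id,δ]` is a field. -/
theorem stmt_15 {R S : Type*} [Ring R] [Ring S] (δ : R → R)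
    (hδ : IsSigmaDerivation (RingHom.id R) δ) (f : R →+* S) (x : S)
    (hS : IsOreExtension (RingHom.id R) δ f x) :
    IsSimpleRing S ↔ IsDeltaSimple δ ∧ IsField (Subring.center S) := by
  constructor
  · intro hs
    haveI := hs
    exact ⟨Stmt15Aux.deltaSimple_of_simple hδ hS hs, IsSimpleRing.isField_center S⟩
  · rintro ⟨h1, h2⟩
    exact Stmt15Aux.simple_of_deltaSimple hδ hS h1 h2
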